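/- Let p ≡ 1 (mod 3) be prime and let χ' be a multiplicative character of F_p of order 3. Then the Jacobi sum J(χ',χ') satisfies |J(χ',χ')|² = p, J(χ',χ') + conj(J(χ',χ')) ≡ 1 mod 3 (as an integer c with J(χ',χ') = (c + 3√3 d i)/2 for integers c,d with 4p = c² + 27d² and c ≡ 1 mod 3). -/

import Mathlib

open Complex

/-- A primitive cube root of unity in `ℂ`. -/
noncomputable def omega3 : ℂ := (-1 + Real.sqrt 3 * Complex.I) / 2

lemma sqrt3_sq : (Real.sqrt 3 : ℂ) ^ 2 = 3 := by
  rw [← Complex.ofReal_pow, Real.sq_sqrt (by norm_num : (3:ℝ) ≥ 0)]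
  norm_num

lemma omega3_sq : omega3 ^ 2 = -1 - omega3 := by
  unfold omega3
  linear_combination (Complex.I ^ 2 / 4) * sqrt3_sq + (3 / 4) * Complex.I_sq

lemma omega3_pow_three : omega3 ^ 3 = 1 := by
  have h := omega3_sq
  linear_combination (omega3 - 1) * h

lemma omega3_ne_one : omega3 ≠ 1 := by
  intro h
  have him : omega3.im = Real.sqrt 3 / 2 := by
    simp [omega3, Complex.div_im]
  rw [h] at him
  simp only [Complex.one_im] at him
  have : Real.sqrt 3 > 0 := Real.sqrt_pos.mpr (by norm_num)
  linarith

lemma isPrimitiveRoot_omega3 : IsPrimitiveRoot omega3 3 := by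
  have hord : orderOf omega3 = 3 := by
    have hdvd : orderOf omega3 ∣ 3 := orderOf_dvd_of_pow_eq_one omega3_pow_three
    rcases (Nat.prime_three.eq_one_or_self_of_dvd _ hdvd) with h | h
    · exact absurd (orderOf_eq_one_iff.mp h) omega3_ne_one
    · exact h
  exact hord ▸ IsPrimitiveRoot.orderOf omega3

lemma adjoin_omega3_repr {x : ℂ} (hx : x ∈ Algebra.adjoin ℤ {omega3}) :
    ∃ e f : ℤ, x = (e : ℂ) + (f : ℂ) * omega3 := by
  induction hx using Algebra.adjoin_induction with
  | mem y hy =>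
      rw [Set.mem_singleton_iff] at hy
      exact ⟨0, 1, by rw [hy]; push_cast; ring⟩
  | algebraMap r => exact ⟨r, 0, by simp⟩
  | add y z hy hz ihy ihz =>
      obtain ⟨e, f, rfl⟩ := ihy
      obtain ⟨e', f', rfl⟩ := ihz
      exact ⟨e + e', f + f', by push_cast; ring⟩
  | mul y z hy hz ihy ihz =>
      obtain ⟨e, f, rfl⟩ := ihy
      obtain ⟨e', f', rfl⟩ := ihz
      refine ⟨e * e' - f * f', e * f' + f * e' - f * f', ?_⟩
      push_cast
      linear_combination ((f : ℂ) * (f' : ℂ)) * omega3_sq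

open Complex in
/-- For `p ≡ 1 (mod 3)` prime and `χ'` a cubic character of `F_p`, the Jacobi sum
`J(χ',χ')` has absolute value squared `p`, and `J(χ',χ') = (c + 3√3 d i)/2` for integers
`c, d` with `4p = c² + 27d²` and `c ≡ 1 (mod 3)`. -/
theorem jacobi_sum_cubic_char (p : ℕ) [Fact p.Prime] (hp : p % 3 = 1)
    (χ' : MulChar (ZMod p) ℂ) (hχ' : orderOf χ' = 3) :
    ‖jacobiSum χ' χ'‖ ^ 2 = p ∧
      ∃ c d : ℤ, jacobiSum χ' χ' =
          ((c : ℂ) + 3 * Real.sqrt 3 * (d : ℂ) * Complex.I) / 2 ∧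
        4 * (p : ℤ) = c ^ 2 + 27 * d ^ 2 ∧ c % 3 = 1 := by
  have hppr : p.Prime := Fact.out
  set J := jacobiSum χ' χ' with hJdef
  have hχ3 : χ' ^ 3 = 1 := hχ' ▸ pow_orderOf_eq_one χ'
  have hχne : χ' ≠ 1 := by
    intro h
    rw [h, orderOf_one] at hχ'
    norm_num at hχ'
  have hχχne : χ' * χ' ≠ 1 := by
    intro h
    have : χ' ^ 2 = 1 := by rwa [sq]
    have := orderOf_dvd_of_pow_eq_one this
    rw [hχ'] at this
    norm_num at this
  -- conjugation sends χ' to χ'⁻¹ pointwise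
  have hconj : ∀ a : ZMod p, (starRingEnd ℂ) (χ' a) = χ'⁻¹ a := by
    intro a
    rcases eq_or_ne a 0 with rfl | ha
    · have h0 : χ' (0 : ZMod p) = 0 := χ'.map_nonunit (by simp)
      have h0' : χ'⁻¹ (0 : ZMod p) = 0 := χ'⁻¹.map_nonunit (by simp)
      rw [h0, h0', map_zero]
    · have hu : IsUnit a := isUnit_iff_ne_zero.mpr ha
      have hpow : (χ' a) ^ 3 = 1 := by
        rw [← MulChar.pow_apply' χ' (by norm_num) a, hχ3, MulChar.one_apply hu]
      have habs : ‖χ' a‖ = 1 := by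
        have h1 : ‖χ' a‖ ^ 3 = 1 := by
          rw [← norm_pow, hpow, norm_one]
        nlinarith [norm_nonneg (χ' a), sq_nonneg (‖χ' a‖ - 1),
          sq_nonneg (‖χ' a‖ + 1)]
      rw [MulChar.inv_apply_eq_inv' χ' a, Complex.inv_def, Complex.normSq_eq_norm_sq, habs]
      simp
  -- conj J = J(χ'⁻¹, χ'⁻¹)
  have hconjJ : (starRingEnd ℂ) J = jacobiSum χ'⁻¹ χ'⁻¹ := by
    rw [hJdef, jacobiSum, jacobiSum, map_sum]
    exact Finset.sum_congr rfl fun x _ => by rw [map_mul, hconj, hconj]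
  -- |J|² = p
  have hcard : (Fintype.card (ZMod p) : ℂ) = (p : ℂ) := by
    rw [ZMod.card p]
  have hJJ : J * (starRingEnd ℂ) J = (p : ℂ) := by
    rw [hconjJ, hJdef]
    have h := jacobiSum_mul_jacobiSum_inv
      (F := ZMod p) (F' := ℂ)
      (by
        rw [ringChar.eq_zero, ZMod.ringChar_zmod_n]
        have := hppr.pos
        omega)
      hχne hχne hχχne
    rw [h, hcard]
  have habs2 : ‖J‖ ^ 2 = (p : ℝ) := by
    have h1 : ((Complex.normSq J : ℂ)) = ((p : ℝ) : ℂ) := by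
      rw [← Complex.mul_conj, hJJ]; norm_num
    have h2 : Complex.normSq J = (p : ℝ) := by exact_mod_cast h1
    rw [Complex.sq_norm, h2]
  refine ⟨habs2, ?_⟩
  -- structure of J
  have hn' : 3 ∣ Fintype.card (ZMod p) - 1 := by
    rw [ZMod.card p]
    omega
  obtain ⟨z, hz, hJz⟩ := exists_jacobiSum_eq_neg_one_add (by norm_num : 2 < 3)
    hχ3 hχ3 hn' isPrimitiveRoot_omega3
  obtain ⟨e, f, rfl⟩ := adjoin_omega3_repr hz
  -- J = (3f - 1) + 3(f - e) ω
  have hJab : J = ((3 * f - 1 : ℤ) : ℂ) + ((3 * (f - e) : ℤ) : ℂ) * omega3 := by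
    rw [hJdef, hJz]
    push_cast
    linear_combination ((e : ℂ) + (f : ℂ) * omega3 - 3 * (f : ℂ)) * omega3_sq
  refine ⟨3 * e + 3 * f - 2, f - e, ?_, ?_, ?_⟩
  · rw [hJab]
    unfold omega3
    push_cast
    ring
  · -- 4p = c² + 27d²
    have hJc : J = (((3 * e + 3 * f - 2 : ℤ) : ℂ) +
        3 * Real.sqrt 3 * ((f - e : ℤ) : ℂ) * Complex.I) / 2 := by
      rw [hJab]; unfold omega3; push_cast; ring
    have hconjc : (starRingEnd ℂ) J = (((3 * e + 3 * f - 2 : ℤ) : ℂ) -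
        3 * Real.sqrt 3 * ((f - e : ℤ) : ℂ) * Complex.I) / 2 := by
      rw [hJc]
      simp only [map_div₀, map_add, map_sub, map_mul, map_intCast, map_ofNat,
        Complex.conj_I, Complex.conj_ofReal]
      ring
    have key : (((3 * e + 3 * f - 2 : ℤ) : ℂ)) ^ 2 +
        27 * (((f - e : ℤ) : ℂ)) ^ 2 = 4 * (p : ℂ) := by
      have h := hJJ
      rw [hconjc, hJc] at h
      linear_combination 4 * h + 9 * (((f - e : ℤ) : ℂ)) ^ 2 * Complex.I ^ 2 * sqrt3_sq
        + 27 * (((f - e : ℤ) : ℂ)) ^ 2 * Complex.I_sq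
    have keyZ : ((4 * (p : ℤ) : ℤ) : ℂ) = (((3 * e + 3 * f - 2) ^ 2 + 27 * (f - e) ^ 2 : ℤ) : ℂ) := by
      push_cast
      push_cast at key
      linear_combination -key
    exact_mod_cast keyZ
  · omega
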